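/- arXiv:0805.2037 — 6 statements merged into one kernel-verified Lean document; each statement's English description precedes it below -/
import Mathlib

section
/- For any two density matrices ρ₁, ρ₂ of size N (positive semidefinite, trace one), tr(ρ₁ρ₂) + √((1 - tr ρ₁²)(1 - tr ρ₂²)) ≤ 1, i.e. the super-fidelity is at most 1. -/
open Matrix ComplexOrder

lemma trace_sq_eq {N : ℕ} {ρ : Matrix (Fin N) (Fin N) ℂ} (h : ρ.IsHermitian) :
    (ρ * ρ).trace = ((∑ i, (h.eigenvalues i)^2 : ℝ) : ℂ) := by
  set U : Matrix (Fin N) (Fin N) ℂ := (h.eigenvectorUnitary : Matrix (Fin N) (Fin N) ℂ) with hUdef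
  set D : Matrix (Fin N) (Fin N) ℂ := Matrix.diagonal (RCLike.ofReal ∘ h.eigenvalues) with hDdef
  have hU : star U * U = 1 := Matrix.mem_unitaryGroup_iff'.mp h.eigenvectorUnitary.2
  have key : (U * D * star U) * (U * D * star U) = U * (D * D) * star U := by
    simp only [mul_assoc]
    rw [show star U * (U * (D * star U)) = D * star U by rw [← mul_assoc, hU, one_mul]]
  conv_lhs => rw [h.spectral_theorem, Unitary.conjStarAlgAut_apply]
  rw [key, Matrix.trace_mul_cycle, ← mul_assoc, hU, one_mul]
  simp [hDdef, Matrix.diagonal_mul_diagonal, Matrix.trace_diagonal, sq]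

lemma trace_eq_sum_eig {N : ℕ} {ρ : Matrix (Fin N) (Fin N) ℂ} (h : ρ.IsHermitian) :
    ρ.trace = ((∑ i, h.eigenvalues i : ℝ) : ℂ) := by
  have hU : star (h.eigenvectorUnitary : Matrix (Fin N) (Fin N) ℂ) *
      (h.eigenvectorUnitary : Matrix (Fin N) (Fin N) ℂ) = 1 :=
    Matrix.mem_unitaryGroup_iff'.mp h.eigenvectorUnitary.2
  conv_lhs => rw [h.spectral_theorem, Unitary.conjStarAlgAut_apply]
  rw [Matrix.trace_mul_cycle, hU, one_mul]
  simp [Matrix.trace_diagonal]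

lemma trace_sq_mem {N : ℕ} {ρ : Matrix (Fin N) (Fin N) ℂ} (h : ρ.PosSemidef)
    (t : ρ.trace = 1) : 0 ≤ ((ρ * ρ).trace).re ∧ ((ρ * ρ).trace).re ≤ 1 := by
  have hre : ((ρ * ρ).trace).re = ∑ i, (h.1.eigenvalues i)^2 := by
    rw [trace_sq_eq h.1, Complex.ofReal_re]
  have hsum : ∑ i, h.1.eigenvalues i = 1 := by
    have := trace_eq_sum_eig h.1
    rw [t] at this
    exact_mod_cast this.symm
  constructor
  · rw [hre]; positivity
  · rw [hre]
    calc ∑ i, (h.1.eigenvalues i)^2 ≤ (∑ i, h.1.eigenvalues i)^2 :=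
          Finset.sum_sq_le_sq_sum_of_nonneg (fun i _ => h.eigenvalues_nonneg i)
      _ = 1 := by rw [hsum]; norm_num

lemma inner_eq_trace {N : ℕ} (A B : Matrix (Fin N) (Fin N) ℂ) (hA : A.IsHermitian) :
    (inner ℂ ((WithLp.equiv 2 (Fin N × Fin N → ℂ)).symm fun p => A p.1 p.2)
      ((WithLp.equiv 2 (Fin N × Fin N → ℂ)).symm fun p => B p.1 p.2) : ℂ) = (A * B).trace := by
  simp only [PiLp.inner_apply, RCLike.inner_apply, WithLp.equiv_symm_apply, PiLp.toLp_apply,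
    Matrix.trace, Matrix.diag, Matrix.mul_apply]
  rw [Fintype.sum_prod_type, Finset.sum_comm]
  refine Finset.sum_congr rfl fun j _ => Finset.sum_congr rfl fun i _ => ?_
  have : (starRingEnd ℂ) (A i j) = A j i := by
    conv_rhs => rw [← hA]
    rfl
  rw [this]
  exact mul_comm _ _

theorem superFidelity_le_one {N : ℕ} (ρ₁ ρ₂ : Matrix (Fin N) (Fin N) ℂ)
    (h1 : ρ₁.PosSemidef) (h2 : ρ₂.PosSemidef)
    (t1 : ρ₁.trace = 1) (t2 : ρ₂.trace = 1) :
    ((ρ₁ * ρ₂).trace).re +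
      Real.sqrt ((1 - ((ρ₁ * ρ₁).trace).re) * (1 - ((ρ₂ * ρ₂).trace).re)) ≤ 1 := by
  set x₁ := ((ρ₁ * ρ₁).trace).re
  set x₂ := ((ρ₂ * ρ₂).trace).re
  obtain ⟨hx1, hx1'⟩ := trace_sq_mem h1 t1
  obtain ⟨hx2, hx2'⟩ := trace_sq_mem h2 t2
  -- Cauchy–Schwarz step
  set a : EuclideanSpace ℂ (Fin N × Fin N) :=
    (WithLp.equiv 2 (Fin N × Fin N → ℂ)).symm fun p => ρ₁ p.1 p.2
  set b : EuclideanSpace ℂ (Fin N × Fin N) :=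
    (WithLp.equiv 2 (Fin N × Fin N → ℂ)).symm fun p => ρ₂ p.1 p.2
  have hab : (inner ℂ a b : ℂ) = (ρ₁ * ρ₂).trace := inner_eq_trace ρ₁ ρ₂ h1.1
  have haa : (inner ℂ a a : ℂ) = (ρ₁ * ρ₁).trace := inner_eq_trace ρ₁ ρ₁ h1.1
  have hbb : (inner ℂ b b : ℂ) = (ρ₂ * ρ₂).trace := inner_eq_trace ρ₂ ρ₂ h2.1
  have hna : ‖a‖ = Real.sqrt x₁ := by
    rw [@norm_eq_sqrt_re_inner ℂ, haa]
    simp [RCLike.re_to_complex]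
    rfl
  have hnb : ‖b‖ = Real.sqrt x₂ := by
    rw [@norm_eq_sqrt_re_inner ℂ, hbb]
    simp [RCLike.re_to_complex]
    rfl
  have hCS : ((ρ₁ * ρ₂).trace).re ≤ Real.sqrt x₁ * Real.sqrt x₂ := by
    rw [← hna, ← hnb, ← hab]
    simpa [RCLike.re_to_complex] using re_inner_le_norm (𝕜 := ℂ) a b
  -- AM-GM steps
  have hg1 : Real.sqrt x₁ * Real.sqrt x₂ ≤ (x₁ + x₂) / 2 := by
    nlinarith [sq_nonneg (Real.sqrt x₁ - Real.sqrt x₂), Real.sq_sqrt hx1, Real.sq_sqrt hx2,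
      Real.sqrt_nonneg x₁, Real.sqrt_nonneg x₂]
  have hg2 : Real.sqrt ((1 - x₁) * (1 - x₂)) ≤ ((1 - x₁) + (1 - x₂)) / 2 := by
    rw [Real.sqrt_mul (by linarith)]
    nlinarith [sq_nonneg (Real.sqrt (1 - x₁) - Real.sqrt (1 - x₂)),
      Real.sq_sqrt (by linarith : (0:ℝ) ≤ 1 - x₁), Real.sq_sqrt (by linarith : (0:ℝ) ≤ 1 - x₂),
      Real.sqrt_nonneg (1 - x₁), Real.sqrt_nonneg (1 - x₂)]
  linarith
end

section
/- For any two density matrices ρ₁, ρ₂, the fidelity F(ρ₁,ρ₂) = (tr√(√ρ₁ ρ₂ √ρ₁))² satisfies F(ρ₁,ρ₂) ≥ tr(ρ₁ρ₂). -/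
open Matrix ComplexOrder

attribute [local instance] Classical.propDecidable

/-- The square root of a positive semidefinite matrix, as defined in Mathlib (Dec 2024). -/
noncomputable def Matrix.PosSemidef.sqrt {n : Type*} [Fintype n] [DecidableEq n] {A : Matrix n n ℂ}
    (hA : A.PosSemidef) : Matrix n n ℂ :=
  hA.1.eigenvectorUnitary.1 * diagonal ((↑) ∘ (√·) ∘ hA.1.eigenvalues) *
    (star hA.1.eigenvectorUnitary : Matrix n n ℂ)

/-- Fidelity `F(ρ₁,ρ₂) = (tr √(√ρ₁ ρ₂ √ρ₁))²` (0 when not defined). -/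
noncomputable def fid {n : Type*} [Fintype n] [DecidableEq n] (ρ₁ ρ₂ : Matrix n n ℂ) : ℝ :=
  if h1 : ρ₁.PosSemidef then
    if h2 : (h1.sqrt * ρ₂ * h1.sqrt).PosSemidef then (h2.sqrt.trace).re ^ 2 else 0
  else 0

lemma Matrix.PosSemidef.posSemidef_sqrt {n : Type*} [Fintype n] [DecidableEq n]
    {A : Matrix n n ℂ} (hA : A.PosSemidef) : hA.sqrt.PosSemidef := by
  rw [Matrix.PosSemidef.sqrt, Matrix.star_eq_conjTranspose]
  exact (posSemidef_diagonal_iff.mpr fun i => by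
    simp [Function.comp_apply, Complex.zero_le_real, Real.sqrt_nonneg]).mul_mul_conjTranspose_same _

lemma Matrix.PosSemidef.sqrt_mul_self {n : Type*} [Fintype n] [DecidableEq n]
    {A : Matrix n n ℂ} (hA : A.PosSemidef) : hA.sqrt * hA.sqrt = A := by
  have hU : star (hA.1.eigenvectorUnitary : Matrix n n ℂ) * hA.1.eigenvectorUnitary = 1 :=
    (Matrix.mem_unitaryGroup_iff').mp hA.1.eigenvectorUnitary.2
  have hD : diagonal (((↑) ∘ (√·) ∘ hA.1.eigenvalues : n → ℂ)) *
      diagonal ((↑) ∘ (√·) ∘ hA.1.eigenvalues) = diagonal (RCLike.ofReal ∘ hA.1.eigenvalues) := by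
    rw [diagonal_mul_diagonal]
    congr 1
    funext i
    simp only [Function.comp_apply]
    rw [← Complex.ofReal_mul, Real.mul_self_sqrt (hA.eigenvalues_nonneg i)]
    rfl
  conv_rhs => rw [hA.1.spectral_theorem, Unitary.conjStarAlgAut_apply]
  rw [Matrix.PosSemidef.sqrt, ← hD]
  simp only [Matrix.mul_assoc]
  rw [← Matrix.mul_assoc (star _) (hA.1.eigenvectorUnitary : Matrix n n ℂ), hU, Matrix.one_mul]

private lemma trace_re_eq_sum_eigenvalues {n : Type*} [Fintype n] [DecidableEq n]
    {P : Matrix n n ℂ} (hP : P.IsHermitian) :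
    P.trace.re = ∑ i, hP.eigenvalues i := by
  set U : Matrix n n ℂ := (hP.eigenvectorUnitary : Matrix n n ℂ)
  have hU : star U * U = 1 := (Matrix.mem_unitaryGroup_iff').mp hP.eigenvectorUnitary.2
  have h : P.trace = (Matrix.diagonal (RCLike.ofReal ∘ hP.eigenvalues)).trace := by
    conv_lhs => rw [hP.spectral_theorem, Unitary.conjStarAlgAut_apply]
    rw [Matrix.trace_mul_cycle, hU, Matrix.one_mul]
  rw [h, Matrix.trace_diagonal]
  simp

private lemma trace_sq_re_eq_sum_sq {n : Type*} [Fintype n] [DecidableEq n]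
    {P : Matrix n n ℂ} (hP : P.IsHermitian) :
    (P * P).trace.re = ∑ i, hP.eigenvalues i ^ 2 := by
  set U : Matrix n n ℂ := (hP.eigenvectorUnitary : Matrix n n ℂ)
  have hU : star U * U = 1 := (Matrix.mem_unitaryGroup_iff').mp hP.eigenvectorUnitary.2
  set D : Matrix n n ℂ := Matrix.diagonal (RCLike.ofReal ∘ hP.eigenvalues)
  have h : P * P = U * (D * D) * star U := by
    conv_lhs => rw [hP.spectral_theorem, Unitary.conjStarAlgAut_apply]
    have h' : star U * (U * D * star U) = D * star U := by
      rw [← Matrix.mul_assoc, ← Matrix.mul_assoc, hU, Matrix.one_mul]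
    calc U * D * star U * (U * D * star U)
        = U * D * (star U * (U * D * star U)) := by noncomm_ring
      _ = U * D * (D * star U) := by rw [h']
      _ = U * (D * D) * star U := by noncomm_ring
  have h2 : (P * P).trace = (D * D).trace := by
    rw [h, Matrix.trace_mul_cycle, ← Matrix.mul_assoc, hU, Matrix.one_mul]

  rw [h2]
  simp [D, Matrix.diagonal_mul_diagonal, Matrix.trace_diagonal, sq]

private lemma key_ineq {n : Type*} [Fintype n] [DecidableEq n]
    {P : Matrix n n ℂ} (hP : P.PosSemidef) :
    ((P * P).trace).re ≤ (P.trace.re) ^ 2 := by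
  rw [trace_sq_re_eq_sum_sq hP.isHermitian, trace_re_eq_sum_eigenvalues hP.isHermitian]
  exact Finset.sum_sq_le_sq_sum_of_nonneg fun i _ => hP.eigenvalues_nonneg i

theorem trace_prod_le_fidelity {N : ℕ} (ρ₁ ρ₂ : Matrix (Fin N) (Fin N) ℂ)
    (h1 : ρ₁.PosSemidef) (h2 : ρ₂.PosSemidef)
    (t1 : ρ₁.trace = 1) (t2 : ρ₂.trace = 1) :
    ((ρ₁ * ρ₂).trace).re ≤ fid ρ₁ ρ₂ := by
  have hM : (h1.sqrt * ρ₂ * h1.sqrt).PosSemidef := by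
    have := h2.mul_mul_conjTranspose_same h1.sqrt
    rwa [h1.posSemidef_sqrt.isHermitian.eq] at this
  have hfid : fid ρ₁ ρ₂ = (hM.sqrt.trace).re ^ 2 := by
    rw [fid, dif_pos h1, dif_pos hM]
  have htr : (ρ₁ * ρ₂).trace = (h1.sqrt * ρ₂ * h1.sqrt).trace := by
    conv_lhs => rw [← h1.sqrt_mul_self]
    rw [← Matrix.trace_mul_cycle]
  have hsq : ((h1.sqrt * ρ₂ * h1.sqrt).trace).re = ((hM.sqrt * hM.sqrt).trace).re :=
    congrArg (fun m => (Matrix.trace m).re) hM.sqrt_mul_self.symm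
  rw [hfid, htr, hsq]
  exact key_ineq hM.posSemidef_sqrt
end

section
/- Sub-fidelity is sub-multiplicative: for density matrices A, B, C, D, E(A⊗B, C⊗D) ≤ E(A,C)·E(B,D), where E(X,Y) = tr(XY) + √(2[(tr XY)² − tr((XY)²)]). -/
open Matrix Kronecker ComplexOrder

/-- Sub-fidelity `E(X,Y) = tr(XY) + √(2[(tr XY)² − tr(XYXY)])`. -/
noncomputable def subFid {n : Type*} [Fintype n] (X Y : Matrix n n ℂ) : ℝ :=
  ((X * Y).trace).re +
    Real.sqrt (2 * (((X * Y).trace).re ^ 2 - ((X * Y * X * Y).trace).re))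

lemma psd_trace_facts {n : Type*} [Fintype n] [DecidableEq n] {M : Matrix n n ℂ}
    (hM : M.PosSemidef) :
    ∃ a p : ℝ, M.trace = (a : ℂ) ∧ (M * M).trace = (p : ℂ) ∧ 0 ≤ a ∧ 0 ≤ p ∧ p ≤ a ^ 2 := by
  have h := hM.1.spectral_theorem
  rw [Unitary.conjStarAlgAut_apply] at h
  set U : Matrix n n ℂ := (hM.1.eigenvectorUnitary : Matrix n n ℂ) with hU
  have hUU : star U * U = 1 := by simp [hU]
  set lam := hM.1.eigenvalues with hlam
  refine ⟨∑ i, lam i, ∑ i, (lam i)^2, ?_, ?_, ?_, ?_, ?_⟩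
  · rw [h, Matrix.trace_mul_cycle, hUU, one_mul, trace_diagonal]
    push_cast
    rfl
  · have hMM : M * M = U * diagonal (fun i => ((lam i : ℂ))^2) * star U := by
      rw [h]
      have : diagonal (RCLike.ofReal ∘ lam) * diagonal (RCLike.ofReal ∘ lam)
          = diagonal (fun i => ((lam i : ℂ))^2) := by
        rw [diagonal_mul_diagonal]
        congr 1
        funext i
        simp [sq]
      simp only [mul_assoc]
      rw [← mul_assoc (star U) U, hUU, one_mul,
        ← mul_assoc (diagonal (RCLike.ofReal ∘ lam)), this]
    rw [hMM, Matrix.trace_mul_cycle, hUU, one_mul, trace_diagonal]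
    push_cast
    rfl
  · exact Finset.sum_nonneg fun i _ => hM.eigenvalues_nonneg i
  · exact Finset.sum_nonneg fun i _ => sq_nonneg _
  · rw [sq, Finset.sum_mul_sum]
    refine Finset.sum_le_sum fun i _ => ?_
    rw [sq]
    calc lam i * lam i ≤ lam i * ∑ j, lam j := by
          refine mul_le_mul_of_nonneg_left ?_ (hM.eigenvalues_nonneg i)
          exact Finset.single_le_sum (fun j _ => hM.eigenvalues_nonneg j) (Finset.mem_univ i)
      _ = ∑ j, lam i * lam j := Finset.mul_sum _ _ _

open scoped MatrixOrder in
lemma psd_pair_trace_facts {n : Type*} [Fintype n] [DecidableEq n] {X Y : Matrix n n ℂ}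
    (hX : X.PosSemidef) (hY : Y.PosSemidef) :
    ∃ a p : ℝ, (X * Y).trace = (a : ℂ) ∧ (X * Y * X * Y).trace = (p : ℂ) ∧
      0 ≤ a ∧ 0 ≤ p ∧ p ≤ a ^ 2 := by
  set S := CFC.sqrt X with hS
  have hSh : Sᴴ = S := (CFC.sqrt_nonneg X).posSemidef.1
  have hM : (S * Y * S).PosSemidef := by
    have := hY.mul_mul_conjTranspose_same S
    rwa [hSh] at this
  obtain ⟨a, p, h1, h2, h3, h4, h5⟩ := psd_trace_facts hM
  have hXS : X = S * S := (CFC.sqrt_mul_sqrt_self X hX.nonneg).symm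
  refine ⟨a, p, ?_, ?_, h3, h4, h5⟩
  · rw [← h1]
    have e1 : X * Y = S * (S * Y) := by rw [hXS]; noncomm_ring
    have e2 : S * Y * S = (S * Y) * S := by noncomm_ring
    rw [e1, e2, Matrix.trace_mul_comm]
  · rw [← h2]
    have e1 : X * Y * X * Y = S * ((S * Y * S) * (S * Y)) := by rw [hXS]; noncomm_ring
    have e2 : (S * Y * S) * (S * Y * S) = ((S * Y * S) * (S * Y)) * S := by noncomm_ring
    rw [e1, e2, Matrix.trace_mul_comm]

lemma subfid_real_ineq (a b p q : ℝ) (ha : 0 ≤ a) (hb : 0 ≤ b) (hp : 0 ≤ p) (hq : 0 ≤ q)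
    (hpa : p ≤ a ^ 2) (hqb : q ≤ b ^ 2) :
    a * b + Real.sqrt (2 * ((a * b) ^ 2 - p * q)) ≤
      (a + Real.sqrt (2 * (a ^ 2 - p))) * (b + Real.sqrt (2 * (b ^ 2 - q))) := by
  set s := Real.sqrt (2 * (a ^ 2 - p)) with hs
  set t := Real.sqrt (2 * (b ^ 2 - q)) with ht
  have hs0 : 0 ≤ s := Real.sqrt_nonneg _
  have ht0 : 0 ≤ t := Real.sqrt_nonneg _
  have hs2 : s ^ 2 = 2 * (a ^ 2 - p) := Real.sq_sqrt (by linarith)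
  have ht2 : t ^ 2 = 2 * (b ^ 2 - q) := Real.sq_sqrt (by linarith)
  have key : Real.sqrt (2 * ((a * b) ^ 2 - p * q)) ≤ b * s + a * t := by
    have h1 : 2 * ((a * b) ^ 2 - p * q) ≤ (b * s + a * t) ^ 2 := by
      nlinarith [mul_nonneg (mul_nonneg hb hs0) (mul_nonneg ha ht0),
        mul_nonneg (sub_nonneg.mpr hpa) (sub_nonneg.mpr hqb)]
    calc Real.sqrt (2 * ((a * b) ^ 2 - p * q)) ≤ Real.sqrt ((b * s + a * t) ^ 2) :=
          Real.sqrt_le_sqrt h1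
      _ = b * s + a * t := Real.sqrt_sq (by positivity)
  nlinarith [mul_nonneg hs0 ht0]

theorem subFidelity_subMultiplicative {N M : ℕ}
    (A C : Matrix (Fin N) (Fin N) ℂ) (B D : Matrix (Fin M) (Fin M) ℂ)
    (hA : A.PosSemidef) (hB : B.PosSemidef) (hC : C.PosSemidef) (hD : D.PosSemidef)
    (tA : A.trace = 1) (tB : B.trace = 1) (tC : C.trace = 1) (tD : D.trace = 1) :
    subFid (A ⊗ₖ B) (C ⊗ₖ D) ≤ subFid A C * subFid B D := by
  obtain ⟨a, p, ha1, ha2, ha3, ha4, ha5⟩ := psd_pair_trace_facts hA hC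
  obtain ⟨b, q, hb1, hb2, hb3, hb4, hb5⟩ := psd_pair_trace_facts hB hD
  have h1 : ((A ⊗ₖ B) * (C ⊗ₖ D)).trace = ((a * b : ℝ) : ℂ) := by
    rw [← mul_kronecker_mul, trace_kronecker, ha1, hb1]; push_cast; ring
  have h2 : ((A ⊗ₖ B) * (C ⊗ₖ D) * (A ⊗ₖ B) * (C ⊗ₖ D)).trace = ((p * q : ℝ) : ℂ) := by
    rw [← mul_kronecker_mul, ← mul_kronecker_mul, ← mul_kronecker_mul, trace_kronecker, ha2, hb2]
    push_cast; ring
  unfold subFid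
  rw [h1, h2, ha1, ha2, hb1, hb2]
  simp only [Complex.ofReal_re]
  calc a * b + Real.sqrt (2 * ((a * b) ^ 2 - p * q)) ≤
        (a + Real.sqrt (2 * (a ^ 2 - p))) * (b + Real.sqrt (2 * (b ^ 2 - q))) :=
        subfid_real_ineq a b p q ha3 hb3 ha4 hb4 ha5 hb5
    _ = _ := by ring_nf
end

section
/- Super-fidelity is concave in its second argument: for density matrices A, B, C and α ∈ [0,1], G(A, αB + (1-α)C) ≥ α G(A,B) + (1-α) G(A,C), where G(X,Y) = tr(XY) + √((1-tr X²)(1-tr Y²)). -/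
open Matrix ComplexOrder

/-- Super-fidelity `G(X,Y) = tr(XY) + √((1-tr X²)(1-tr Y²))`. -/
noncomputable def supFid {n : Type*} [Fintype n] (X Y : Matrix n n ℂ) : ℝ :=
  ((X * Y).trace).re +
    Real.sqrt ((1 - ((X * X).trace).re) * (1 - ((Y * Y).trace).re))

/-- 2x2-minor bound for PSD matrices. -/
lemma normSq_entry_le {N : ℕ} {M : Matrix (Fin N) (Fin N) ℂ} (hM : M.PosSemidef)
    (i j : Fin N) :
    Complex.normSq (M i j) ≤ (M i i).re * (M j j).re := by
  set c := Complex.normSq (M i j) with hc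
  have hc0 : 0 ≤ c := Complex.normSq_nonneg _
  have hji : M j i = starRingEnd ℂ (M i j) := by
    have := congrFun (congrFun hM.1 j) i
    rw [conjTranspose_apply] at this
    exact this.symm
  have hdiag : ∀ k : Fin N, 0 ≤ (M k k).re := by
    intro k
    have h := (hM.submatrix ![k]).re_dotProduct_nonneg ![(1:ℂ)]
    simpa [dotProduct, mulVec, Fin.sum_univ_one] using h
  have hquad : ∀ s : ℝ, 0 ≤ (M i i).re * (s * s) + (-2 * c) * s + c * (M j j).re := by
    intro s
    set v : Fin 2 → ℂ := ![(s : ℂ), -(starRingEnd ℂ (M i j))] with hv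
    have hP := (hM.submatrix ![i, j]).re_dotProduct_nonneg v
    have h1 : M i j * starRingEnd ℂ (M i j) = (c : ℂ) := Complex.mul_conj _
    have hcalc : star v ⬝ᵥ (M.submatrix ![i, j] ![i, j]) *ᵥ v =
        ((s*s : ℝ) : ℂ) * M i i - ((2*c*s : ℝ):ℂ) + ((c:ℝ):ℂ) * M j j := by
      simp [hv, dotProduct, mulVec, Fin.sum_univ_two, hji, Complex.conj_ofReal]
      linear_combination ((M j j) - 2*(s:ℂ)) * h1
    rw [hcalc] at hP
    simp only [RCLike.re_to_complex, Complex.add_re, Complex.sub_re,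
      Complex.re_ofReal_mul, Complex.ofReal_re] at hP
    nlinarith [hP]
  have hd := discrim_le_zero hquad
  rw [discrim] at hd
  rcases eq_or_lt_of_le hc0 with h0 | h0
  · nlinarith [hdiag i, hdiag j]
  · nlinarith

/-- For a Hermitian matrix, `tr(X²)` is the sum of squared norms of the entries. -/
lemma trace_sq_re_eq {N : ℕ} {X : Matrix (Fin N) (Fin N) ℂ} (hX : X.IsHermitian) :
    ((X * X).trace).re = ∑ i, ∑ j, Complex.normSq (X i j) := by
  have h : ∀ i j, X j i = starRingEnd ℂ (X i j) := fun i j => by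
    have := congrFun (congrFun hX j) i
    rw [conjTranspose_apply] at this
    exact this.symm
  simp only [Matrix.trace, Matrix.diag, Matrix.mul_apply]
  rw [Complex.re_sum]
  refine Finset.sum_congr rfl fun i _ => ?_
  rw [Complex.re_sum]
  refine Finset.sum_congr rfl fun j _ => ?_
  rw [h i j, Complex.mul_conj]
  simp

lemma trace_sq_re_nonneg {N : ℕ} {X : Matrix (Fin N) (Fin N) ℂ} (hX : X.IsHermitian) :
    0 ≤ ((X * X).trace).re := by
  rw [trace_sq_re_eq hX]
  exact Finset.sum_nonneg fun i _ => Finset.sum_nonneg fun j _ => Complex.normSq_nonneg _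

/-- For a PSD matrix of trace 1, `tr(X²) ≤ 1`. -/
lemma trace_sq_re_le_one {N : ℕ} {X : Matrix (Fin N) (Fin N) ℂ} (hX : X.PosSemidef)
    (hT : X.trace = 1) : ((X * X).trace).re ≤ 1 := by
  rw [trace_sq_re_eq hX.1]
  have h1 : ∑ i, (X i i).re = 1 := by
    have : (X.trace).re = 1 := by rw [hT]; simp
    rw [← this, Matrix.trace, Complex.re_sum]
    rfl
  calc ∑ i, ∑ j, Complex.normSq (X i j)
      ≤ ∑ i, ∑ j, (X i i).re * (X j j).re := by
        refine Finset.sum_le_sum fun i _ => Finset.sum_le_sum fun j _ => ?_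
        exact normSq_entry_le hX i j
    _ = (∑ i, (X i i).re) * (∑ j, (X j j).re) := by
        rw [Finset.sum_mul]
        refine Finset.sum_congr rfl fun i _ => ?_
        rw [Finset.mul_sum]
    _ = 1 := by rw [h1]; ring

/-- The key scalar inequality. -/
lemma key_ineq_s7 (k t s r a b : ℝ) (hk : 0 ≤ k) (ht : t ≤ 1) (hs : s ≤ 1)
    (hr : 2 * r ≤ t + s) (ha : 0 ≤ a) (hb : 0 ≤ b) (hab : a + b = 1) :
    a * Real.sqrt (k * (1 - t)) + b * Real.sqrt (k * (1 - s)) ≤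
      Real.sqrt (k * (1 - (a^2 * t + 2 * (a * b) * r + b^2 * s))) := by
  rw [Real.sqrt_mul hk, Real.sqrt_mul hk, Real.sqrt_mul hk]
  set u := Real.sqrt (1 - t) with hu'
  set v := Real.sqrt (1 - s) with hv'
  have hu0 : 0 ≤ u := Real.sqrt_nonneg _
  have hv0 : 0 ≤ v := Real.sqrt_nonneg _
  have hu : u ^ 2 = 1 - t := Real.sq_sqrt (by linarith)
  have hv : v ^ 2 = 1 - s := Real.sq_sqrt (by linarith)
  have huv : u * v ≤ 1 - r := by nlinarith [sq_nonneg (u - v)]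
  have hm0 : 0 ≤ 1 - (a^2 * t + 2 * (a * b) * r + b^2 * s) := by
    have h1r : (0:ℝ) ≤ 1 - r := by linarith
    nlinarith [mul_nonneg (sq_nonneg a) (show (0:ℝ) ≤ 1 - t by linarith),
      mul_nonneg (sq_nonneg b) (show (0:ℝ) ≤ 1 - s by linarith),
      mul_nonneg (mul_nonneg ha hb) h1r]
  have h : a * u + b * v ≤ Real.sqrt (1 - (a^2 * t + 2 * (a * b) * r + b^2 * s)) := by
    rw [Real.le_sqrt (by positivity) hm0]
    nlinarith [mul_nonneg (mul_nonneg ha hb) (sub_nonneg.2 huv)]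
  nlinarith [Real.sqrt_nonneg k, mul_le_mul_of_nonneg_left h (Real.sqrt_nonneg k)]

theorem superFidelity_concave {N : ℕ} (A B C : Matrix (Fin N) (Fin N) ℂ)
    (hA : A.PosSemidef) (hB : B.PosSemidef) (hC : C.PosSemidef)
    (tA : A.trace = 1) (tB : B.trace = 1) (tC : C.trace = 1)
    (α : ℝ) (hα0 : 0 ≤ α) (hα1 : α ≤ 1) :
    supFid A ((α : ℂ) • B + ((1 - α : ℝ) : ℂ) • C) ≥
      α * supFid A B + (1 - α) * supFid A C := by
  set β := 1 - α with hβ'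
  have hβ0 : 0 ≤ β := by linarith
  set Y : Matrix (Fin N) (Fin N) ℂ := (α : ℂ) • B + ((β : ℝ) : ℂ) • C with hY
  -- linearity of the trace cross term
  have e1 : ((A * Y).trace).re = α * ((A * B).trace).re + β * ((A * C).trace).re := by
    have : (A * Y).trace = (α : ℂ) * (A * B).trace + (β : ℂ) * (A * C).trace := by
      rw [hY, mul_add, mul_smul_comm, mul_smul_comm, trace_add, trace_smul, trace_smul]
      simp [smul_eq_mul]
    rw [this]
    simp [Complex.add_re, Complex.re_ofReal_mul]
  -- expansion of tr(Y²)
  have hcb : (C * B).trace = (B * C).trace := trace_mul_comm C B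
  have e2 : ((Y * Y).trace).re = α^2 * ((B * B).trace).re
      + 2 * (α * β) * ((B * C).trace).re + β^2 * ((C * C).trace).re := by
    have : (Y * Y).trace = ((α^2 : ℝ) : ℂ) * (B * B).trace
        + ((2 * (α * β) : ℝ) : ℂ) * (B * C).trace + ((β^2 : ℝ) : ℂ) * (C * C).trace := by
      rw [hY]
      simp only [add_mul, mul_add, smul_mul_assoc, mul_smul_comm, trace_add, trace_smul,
        smul_smul, smul_eq_mul]
      push_cast
      linear_combination ((α : ℂ) * (β : ℂ)) * hcb
    rw [this]
    simp only [Complex.add_re, Complex.re_ofReal_mul]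
  -- abbreviations
  set kA := 1 - ((A * A).trace).re with hkA
  set t := ((B * B).trace).re with ht'
  set s := ((C * C).trace).re with hs'
  set r := ((B * C).trace).re with hr'
  have hk : 0 ≤ kA := by
    have := trace_sq_re_le_one hA tA
    simp only [hkA]; linarith
  have ht1 : t ≤ 1 := trace_sq_re_le_one hB tB
  have hs1 : s ≤ 1 := trace_sq_re_le_one hC tC
  have hr2 : 2 * r ≤ t + s := by
    have hH : (B - C).IsHermitian := hB.1.sub hC.1
    have h0 := trace_sq_re_nonneg hH
    have : ((B - C) * (B - C)).trace = (B * B).trace - (B * C).trace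
        - (C * B).trace + (C * C).trace := by
      simp only [sub_mul, mul_sub, trace_sub]
      ring
    rw [this, hcb] at h0
    simp only [Complex.add_re, Complex.sub_re] at h0
    simp only [ht', hs', hr'] at *
    linarith
  have key := key_ineq_s7 kA t s r α β hk ht1 hs1 hr2 hα0 hβ0 (by simp [hβ'])
  -- assemble
  simp only [supFid, ge_iff_le]
  rw [e1, e2]
  have : α * (((A * B).trace).re + Real.sqrt (kA * (1 - t)))
      + β * (((A * C).trace).re + Real.sqrt (kA * (1 - s)))
      ≤ α * ((A * B).trace).re + β * ((A * C).trace).re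
        + Real.sqrt (kA * (1 - (α^2 * t + 2 * (α * β) * r + β^2 * s))) := by
    nlinarith [key]
  simpa [hkA, mul_add, add_assoc] using this
end

section
/- For real numbers α, β, γ, δ ∈ [0,1], √((1-αβ)(1-γδ)) ≥ √(αγ)·√((1-β)(1-δ)) + √(βδ)·√((1-α)(1-γ)) + √((1-α)(1-γ)(1-β)(1-δ)). -/
open Real

lemma cs3 (a b c d e f : ℝ) (ha : 0 ≤ a) (hb : 0 ≤ b) (hc : 0 ≤ c)
    (hd : 0 ≤ d) (he : 0 ≤ e) (hf : 0 ≤ f) :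
    Real.sqrt a * Real.sqrt d + Real.sqrt b * Real.sqrt e + Real.sqrt c * Real.sqrt f ≤
      Real.sqrt ((a + b + c) * (d + e + f)) := by
  have hL : 0 ≤ Real.sqrt a * Real.sqrt d + Real.sqrt b * Real.sqrt e + Real.sqrt c * Real.sqrt f := by
    positivity
  rw [show ((a+b+c)*(d+e+f)) = (a+b+c)*(d+e+f) from rfl, ← Real.sqrt_sq hL]
  apply Real.sqrt_le_sqrt
  nlinarith [sq_nonneg (Real.sqrt a * Real.sqrt e - Real.sqrt b * Real.sqrt d),
    sq_nonneg (Real.sqrt a * Real.sqrt f - Real.sqrt c * Real.sqrt d),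
    sq_nonneg (Real.sqrt b * Real.sqrt f - Real.sqrt c * Real.sqrt e),
    Real.sq_sqrt ha, Real.sq_sqrt hb, Real.sq_sqrt hc,
    Real.sq_sqrt hd, Real.sq_sqrt he, Real.sq_sqrt hf,
    Real.sq_sqrt (show (0:ℝ) ≤ a+b+c by linarith),
    Real.sq_sqrt (show (0:ℝ) ≤ d+e+f by linarith),
    Real.sqrt_nonneg a, Real.sqrt_nonneg b, Real.sqrt_nonneg c,
    Real.sqrt_nonneg d, Real.sqrt_nonneg e, Real.sqrt_nonneg f,
    Real.sqrt_nonneg (a+b+c), Real.sqrt_nonneg (d+e+f),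
    mul_nonneg (Real.sqrt_nonneg a) (Real.sqrt_nonneg d),
    mul_nonneg (Real.sqrt_nonneg b) (Real.sqrt_nonneg e),
    mul_nonneg (Real.sqrt_nonneg c) (Real.sqrt_nonneg f)]

theorem scalar_superMultiplicativity_ineq (α β γ δ : ℝ)
    (hα0 : 0 ≤ α) (hα1 : α ≤ 1) (hβ0 : 0 ≤ β) (hβ1 : β ≤ 1)
    (hγ0 : 0 ≤ γ) (hγ1 : γ ≤ 1) (hδ0 : 0 ≤ δ) (hδ1 : δ ≤ 1) :
    Real.sqrt ((1 - α * β) * (1 - γ * δ)) ≥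
      Real.sqrt (α * γ) * Real.sqrt ((1 - β) * (1 - δ)) +
      Real.sqrt (β * δ) * Real.sqrt ((1 - α) * (1 - γ)) +
      Real.sqrt ((1 - α) * (1 - γ) * (1 - β) * (1 - δ)) := by
  have h := cs3 (α*(1-β)) (β*(1-α)) ((1-α)*(1-β)) (γ*(1-δ)) (δ*(1-γ)) ((1-γ)*(1-δ))
    (by nlinarith) (by nlinarith) (by nlinarith) (by nlinarith) (by nlinarith) (by nlinarith)
  have e1 : α*(1-β) + β*(1-α) + (1-α)*(1-β) = 1 - α*β := by ring
  have e2 : γ*(1-δ) + δ*(1-γ) + (1-γ)*(1-δ) = 1 - γ*δ := by ring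
  rw [e1, e2] at h
  have s1 : Real.sqrt (α*(1-β)) * Real.sqrt (γ*(1-δ)) =
      Real.sqrt (α * γ) * Real.sqrt ((1 - β) * (1 - δ)) := by
    rw [← Real.sqrt_mul (by nlinarith : (0:ℝ) ≤ α*(1-β)), ← Real.sqrt_mul (by nlinarith : (0:ℝ) ≤ α*γ)]
    congr 1; ring
  have s2 : Real.sqrt (β*(1-α)) * Real.sqrt (δ*(1-γ)) =
      Real.sqrt (β * δ) * Real.sqrt ((1 - α) * (1 - γ)) := by
    rw [← Real.sqrt_mul (by nlinarith : (0:ℝ) ≤ β*(1-α)), ← Real.sqrt_mul (by nlinarith : (0:ℝ) ≤ β*δ)]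
    congr 1; ring
  have s3 : Real.sqrt ((1-α)*(1-β)) * Real.sqrt ((1-γ)*(1-δ)) =
      Real.sqrt ((1 - α) * (1 - γ) * (1 - β) * (1 - δ)) := by
    rw [← Real.sqrt_mul (by nlinarith : (0:ℝ) ≤ (1-α)*(1-β))]
    congr 1; ring
  rw [s1, s2, s3] at h
  linarith
end

section
/- For nonnegative reals α, β, a, b with a ≤ α² and b ≤ β², one has αβ + √(2(α²β² − ab)) ≤ (α + √(2(α² − a)))·(β + √(2(β² − b))). -/
private lemma my_sqrt_add_le (x y : ℝ) (hx : 0 ≤ x) (hy : 0 ≤ y) :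
    Real.sqrt (x + y) ≤ Real.sqrt x + Real.sqrt y := by
  rw [show Real.sqrt x + Real.sqrt y = Real.sqrt ((Real.sqrt x + Real.sqrt y) ^ 2) from
    (Real.sqrt_sq (by positivity)).symm]
  apply Real.sqrt_le_sqrt
  nlinarith [Real.sq_sqrt hx, Real.sq_sqrt hy, Real.sqrt_nonneg x, Real.sqrt_nonneg y]

theorem scalar_subMultiplicativity_ineq (α β a b : ℝ)
    (hα : 0 ≤ α) (hβ : 0 ≤ β) (ha0 : 0 ≤ a) (hb0 : 0 ≤ b)
    (ha : a ≤ α ^ 2) (hb : b ≤ β ^ 2) :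
    α * β + Real.sqrt (2 * (α ^ 2 * β ^ 2 - a * b)) ≤
      (α + Real.sqrt (2 * (α ^ 2 - a))) * (β + Real.sqrt (2 * (β ^ 2 - b))) := by
  have hA : (0:ℝ) ≤ α ^ 2 - a := by linarith
  have hB : (0:ℝ) ≤ β ^ 2 - b := by linarith
  have hdec : 2 * (α ^ 2 * β ^ 2 - a * b)
      = 2 * (b * (α ^ 2 - a)) + (2 * (a * (β ^ 2 - b)) + 2 * ((α ^ 2 - a) * (β ^ 2 - b))) := by
    ring
  have h1 : Real.sqrt (2 * (α ^ 2 * β ^ 2 - a * b))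
      ≤ Real.sqrt (2 * (b * (α ^ 2 - a))) + (Real.sqrt (2 * (a * (β ^ 2 - b)))
        + Real.sqrt (2 * ((α ^ 2 - a) * (β ^ 2 - b)))) := by
    rw [hdec]
    calc Real.sqrt (2 * (b * (α ^ 2 - a)) + (2 * (a * (β ^ 2 - b)) + 2 * ((α ^ 2 - a) * (β ^ 2 - b))))
        ≤ Real.sqrt (2 * (b * (α ^ 2 - a))) + Real.sqrt (2 * (a * (β ^ 2 - b)) + 2 * ((α ^ 2 - a) * (β ^ 2 - b))) :=
          my_sqrt_add_le _ _ (by positivity) (by positivity)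
      _ ≤ _ := by
          gcongr
          exact my_sqrt_add_le _ _ (by positivity) (by positivity)
  have hsb : Real.sqrt b ≤ β := by
    rw [show β = Real.sqrt (β ^ 2) by rw [Real.sqrt_sq hβ]]
    exact Real.sqrt_le_sqrt hb
  have hsa : Real.sqrt a ≤ α := by
    rw [show α = Real.sqrt (α ^ 2) by rw [Real.sqrt_sq hα]]
    exact Real.sqrt_le_sqrt ha
  have t1 : Real.sqrt (2 * (b * (α ^ 2 - a))) ≤ β * Real.sqrt (2 * (α ^ 2 - a)) := by
    rw [show 2 * (b * (α ^ 2 - a)) = b * (2 * (α ^ 2 - a)) by ring,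
      Real.sqrt_mul hb0]
    gcongr
  have t2 : Real.sqrt (2 * (a * (β ^ 2 - b))) ≤ α * Real.sqrt (2 * (β ^ 2 - b)) := by
    rw [show 2 * (a * (β ^ 2 - b)) = a * (2 * (β ^ 2 - b)) by ring,
      Real.sqrt_mul ha0]
    gcongr
  have t3 : Real.sqrt (2 * ((α ^ 2 - a) * (β ^ 2 - b)))
      ≤ Real.sqrt (2 * (α ^ 2 - a)) * Real.sqrt (2 * (β ^ 2 - b)) := by
    rw [← Real.sqrt_mul (by positivity)]
    apply Real.sqrt_le_sqrt
    nlinarith [mul_nonneg hA hB]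
  have expand : (α + Real.sqrt (2 * (α ^ 2 - a))) * (β + Real.sqrt (2 * (β ^ 2 - b)))
      = α * β + (β * Real.sqrt (2 * (α ^ 2 - a)) + (α * Real.sqrt (2 * (β ^ 2 - b))
        + Real.sqrt (2 * (α ^ 2 - a)) * Real.sqrt (2 * (β ^ 2 - b)))) := by ring
  rw [expand]
  linarith
end
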